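/- For any symmetric bounded measurable function W : [0,1]² → ℝ, one has t(K₃, W) ≤ (∫∫ W(x,y)² dx dy)^{3/2}, where t(K₃, W) = ∫∫∫ W(x,y)W(x,z)W(y,z) dx dy dz. -/

import Mathlib

open MeasureTheory Real

noncomputable section

def I01 : Set ℝ := Set.Icc 0 1

/-- Triangle density of a kernel `W`. -/
def tK3 (W : ℝ → ℝ → ℝ) : ℝ :=
  ∫ x in I01, ∫ y in I01, ∫ z in I01, W x y * W x z * W y z

private lemma integrable_of_bdd' {μ : Measure ℝ} [IsFiniteMeasure μ] {f : ℝ → ℝ}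
    (hm : AEStronglyMeasurable f μ) {C : ℝ} (hb : ∀ x, |f x| ≤ C) : Integrable f μ :=
  memLp_one_iff_integrable.mp <| MemLp.of_bound hm C
    (Filter.Eventually.of_forall fun x => by simpa [Real.norm_eq_abs] using hb x)

private lemma cs {μ : Measure ℝ} [IsFiniteMeasure μ] {f g : ℝ → ℝ}
    (hf : AEStronglyMeasurable f μ) (hg : AEStronglyMeasurable g μ)
    {Cf Cg : ℝ} (hfb : ∀ x, |f x| ≤ Cf) (hgb : ∀ x, |g x| ≤ Cg) :
    ∫ x, f x * g x ∂μ ≤ Real.sqrt (∫ x, f x ^ 2 ∂μ) * Real.sqrt (∫ x, g x ^ 2 ∂μ) := by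
  have hf2 : MemLp f 2 μ := MemLp.of_bound hf Cf
    (Filter.Eventually.of_forall fun x => by simpa [Real.norm_eq_abs] using hfb x)
  have hg2 : MemLp g 2 μ := MemLp.of_bound hg Cg
    (Filter.Eventually.of_forall fun x => by simpa [Real.norm_eq_abs] using hgb x)
  have hpq : Real.HolderConjugate 2 2 := ⟨by norm_num, by norm_num, by norm_num⟩
  have h2 : (ENNReal.ofReal (2:ℝ)) = 2 := by norm_num
  have key := integral_mul_norm_le_Lp_mul_Lq (μ := μ) hpq (h2 ▸ hf2) (h2 ▸ hg2)
  have hmul : Integrable (fun x => f x * g x) μ :=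
    integrable_of_bdd' (hf.mul hg) (C := |Cf| * |Cg|) fun x => by
      rw [abs_mul]
      exact mul_le_mul ((hfb x).trans (le_abs_self _)) ((hgb x).trans (le_abs_self _))
        (abs_nonneg _) (abs_nonneg _)
  calc ∫ x, f x * g x ∂μ ≤ ∫ x, ‖f x‖ * ‖g x‖ ∂μ := by
        refine integral_mono hmul ?_ fun x => ?_
        · simpa [Real.norm_eq_abs, ← abs_mul] using hmul.abs
        · simpa [Real.norm_eq_abs, ← abs_mul] using le_abs_self (f x * g x)
    _ ≤ (∫ x, ‖f x‖ ^ (2:ℝ) ∂μ) ^ ((1:ℝ)/2) * (∫ x, ‖g x‖ ^ (2:ℝ) ∂μ) ^ ((1:ℝ)/2) := key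
    _ = Real.sqrt (∫ x, f x ^ 2 ∂μ) * Real.sqrt (∫ x, g x ^ 2 ∂μ) := by
        have hn : ∀ (h : ℝ → ℝ), (∫ x, ‖h x‖ ^ (2:ℝ) ∂μ) = ∫ x, h x ^ 2 ∂μ := fun h => by
          refine integral_congr_ae (Filter.Eventually.of_forall fun x => ?_)
          show ‖h x‖ ^ (2:ℝ) = h x ^ 2
          rw [Real.norm_eq_abs, show (2:ℝ) = ((2:ℕ):ℝ) by norm_num, Real.rpow_natCast, sq_abs]
        rw [hn f, hn g, Real.sqrt_eq_rpow, Real.sqrt_eq_rpow]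

private lemma main_aux (W : ℝ → ℝ → ℝ) (C : ℝ) (hC0 : 0 ≤ C)
    (hmeas : Measurable (Function.uncurry W)) (hC : ∀ x y, |W x y| ≤ C) :
    tK3 W ≤ (∫ x in I01, ∫ y in I01, (W x y) ^ 2) ^ ((3 : ℝ) / 2) := by
  set μ : Measure ℝ := volume.restrict I01 with hμ
  haveI : IsProbabilityMeasure μ := by
    constructor
    rw [hμ, Measure.restrict_apply_univ]
    simp [I01]
  -- basic measurability
  have hWx : ∀ x, Measurable (W x) := fun x =>
    hmeas.comp measurable_prodMk_left
  set g : ℝ → ℝ → ℝ := fun x y => ∫ z, W x z * W y z ∂μ with hgdef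
  set P : ℝ → ℝ := fun x => ∫ z, W x z ^ 2 ∂μ with hPdef
  set S : ℝ := ∫ x, P x ∂μ with hSdef
  have hPnn : ∀ x, 0 ≤ P x := fun x => integral_nonneg fun z => sq_nonneg _
  have hSnn : 0 ≤ S := integral_nonneg fun x => hPnn x
  have hPSM : StronglyMeasurable P := by
    have : Measurable fun p : ℝ × ℝ => W p.1 p.2 ^ 2 := (hmeas.pow_const 2)
    exact this.stronglyMeasurable.integral_prod_right'
  have hPb : ∀ x, |P x| ≤ C * C := fun x => by
    have := norm_integral_le_of_norm_le_const (μ := μ) (C := C * C)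
      (f := fun z => W x z ^ 2)
      (Filter.Eventually.of_forall fun z => by
        rw [Real.norm_eq_abs, abs_pow, sq]
        exact mul_le_mul (hC x z) (hC x z) (abs_nonneg _) hC0)
    simpa [Real.norm_eq_abs] using this
  have hgSM : StronglyMeasurable (fun p : ℝ × ℝ => g p.1 p.2) := by
    have h1 : Measurable fun p : (ℝ × ℝ) × ℝ => W p.1.1 p.2 * W p.1.2 p.2 :=
      (hmeas.comp (measurable_fst.fst.prodMk measurable_snd)).mul
        (hmeas.comp (measurable_fst.snd.prodMk measurable_snd))
    exact h1.stronglyMeasurable.integral_prod_right'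
  have hgx : ∀ x, Measurable (g x) := fun x =>
    hgSM.measurable.comp measurable_prodMk_left
  have hgb : ∀ x y, |g x y| ≤ C * C := fun x y => by
    have := norm_integral_le_of_norm_le_const (μ := μ) (C := C * C)
      (f := fun z => W x z * W y z)
      (Filter.Eventually.of_forall fun z => by
        rw [Real.norm_eq_abs, abs_mul]
        exact mul_le_mul (hC x z) (hC y z) (abs_nonneg _) hC0)
    simpa [Real.norm_eq_abs] using this
  -- pointwise bound: g x y ^ 2 ≤ P x * P y
  have hg_sq : ∀ x y, g x y ^ 2 ≤ P x * P y := by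
    intro x y
    have h₁ : g x y ≤ Real.sqrt (P x) * Real.sqrt (P y) :=
      cs (hWx x).aestronglyMeasurable (hWx y).aestronglyMeasurable (hC x) (hC y)
    have h₂ : -(g x y) ≤ Real.sqrt (P x) * Real.sqrt (P y) := by
      have := cs (μ := μ) (f := fun z => -(W x z)) (g := W y)
        ((hWx x).neg).aestronglyMeasurable (hWx y).aestronglyMeasurable
        (Cf := C) (fun z => by simpa using hC x z) (hC y)
      have e1 : (∫ z, -(W x z) * W y z ∂μ) = -(g x y) := by
        rw [hgdef]
        simp [neg_mul, integral_neg]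
      have e2 : (∫ z, (-(W x z)) ^ 2 ∂μ) = P x := by simp [hPdef]
      rwa [e1, e2] at this
    have habs : |g x y| ≤ Real.sqrt (P x) * Real.sqrt (P y) := abs_le.2 ⟨by linarith, h₁⟩
    calc g x y ^ 2 = |g x y| ^ 2 := (sq_abs _).symm
      _ ≤ (Real.sqrt (P x) * Real.sqrt (P y)) ^ 2 :=
          pow_le_pow_left₀ (abs_nonneg _) habs 2
      _ = P x * P y := by
          rw [mul_pow, Real.sq_sqrt (hPnn x), Real.sq_sqrt (hPnn y)]
  -- per-x bound
  have key1 : ∀ x, (∫ y, W x y * g x y ∂μ) ≤ P x * Real.sqrt S := by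
    intro x
    have h1 : (∫ y, W x y * g x y ∂μ) ≤
        Real.sqrt (P x) * Real.sqrt (∫ y, g x y ^ 2 ∂μ) :=
      cs (hWx x).aestronglyMeasurable (hgx x).aestronglyMeasurable (hC x) (hgb x)
    have h2 : (∫ y, g x y ^ 2 ∂μ) ≤ P x * S := by
      have hint1 : Integrable (fun y => g x y ^ 2) μ :=
        integrable_of_bdd' ((hgx x).pow_const 2).aestronglyMeasurable
          (C := (C*C)*(C*C)) fun y => by
            rw [abs_pow, sq]
            exact mul_le_mul (hgb x y) (hgb x y) (abs_nonneg _)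
              (mul_nonneg hC0 hC0)
      have hint2 : Integrable (fun y => P x * P y) μ :=
        (integrable_of_bdd' hPSM.aestronglyMeasurable hPb).const_mul _
      calc (∫ y, g x y ^ 2 ∂μ) ≤ ∫ y, P x * P y ∂μ :=
            integral_mono hint1 hint2 fun y => hg_sq x y
        _ = P x * S := by rw [hSdef, integral_const_mul]
    calc (∫ y, W x y * g x y ∂μ)
        ≤ Real.sqrt (P x) * Real.sqrt (∫ y, g x y ^ 2 ∂μ) := h1
      _ ≤ Real.sqrt (P x) * (Real.sqrt (P x) * Real.sqrt S) := by
          refine mul_le_mul_of_nonneg_left ?_ (Real.sqrt_nonneg _)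
          rw [← Real.sqrt_mul (hPnn x)]
          exact Real.sqrt_le_sqrt h2
      _ = P x * Real.sqrt S := by
          rw [← mul_assoc, Real.mul_self_sqrt (hPnn x)]
  -- rewrite tK3
  have htK : tK3 W = ∫ x, (∫ y, W x y * g x y ∂μ) ∂μ := by
    unfold tK3
    simp_rw [mul_assoc, MeasureTheory.integral_const_mul]
    rfl
  -- integrability of the inner function
  have hinnerSM : StronglyMeasurable (fun x => ∫ y, W x y * g x y ∂μ) := by
    have h1 : StronglyMeasurable (fun p : ℝ × ℝ => W p.1 p.2 * g p.1 p.2) :=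
      hmeas.stronglyMeasurable.mul hgSM
    exact h1.integral_prod_right'
  have hinner_bdd : ∀ x, |∫ y, W x y * g x y ∂μ| ≤ C * (C * C) := fun x => by
    have := norm_integral_le_of_norm_le_const (μ := μ) (C := C * (C * C))
      (f := fun y => W x y * g x y)
      (Filter.Eventually.of_forall fun y => by
        rw [Real.norm_eq_abs, abs_mul]
        exact mul_le_mul (hC x y) (hgb x y) (abs_nonneg _) hC0)
    simpa [Real.norm_eq_abs] using this
  have hint_inner : Integrable (fun x => ∫ y, W x y * g x y ∂μ) μ :=
    integrable_of_bdd' hinnerSM.aestronglyMeasurable hinner_bdd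
  have hint_rhs : Integrable (fun x => P x * Real.sqrt S) μ :=
    (integrable_of_bdd' hPSM.aestronglyMeasurable hPb).mul_const _
  have final : tK3 W ≤ S * Real.sqrt S := by
    rw [htK]
    calc (∫ x, (∫ y, W x y * g x y ∂μ) ∂μ)
        ≤ ∫ x, P x * Real.sqrt S ∂μ := integral_mono hint_inner hint_rhs key1
      _ = S * Real.sqrt S := by rw [integral_mul_const, hSdef]
  have hrpow : S ^ ((3:ℝ)/2) = S * Real.sqrt S := by
    rw [Real.sqrt_eq_rpow, show (3:ℝ)/2 = 1 + 1/2 by norm_num,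
      Real.rpow_add' hSnn (by norm_num), Real.rpow_one]
  rw [hrpow]
  exact final

theorem stmt_3 (W : ℝ → ℝ → ℝ)
    (hsymm : ∀ x y, W x y = W y x)
    (hmeas : Measurable (Function.uncurry W))
    (hbdd : ∃ C : ℝ, ∀ x y, |W x y| ≤ C) :
    tK3 W ≤ (∫ x in I01, ∫ y in I01, (W x y) ^ 2) ^ ((3 : ℝ) / 2) := by
  obtain ⟨C, hC⟩ := hbdd
  exact main_aux W C ((abs_nonneg _).trans (hC 0 0)) hmeas hC
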